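/- arXiv:2507.17921 — 2 statements merged into one kernel-verified Lean document; each statement's English description precedes it below -/
import Mathlib

section
/- Let w ≥ 1, let u ∈ ℝ^w with ‖u‖₂ = 1, let σ > 0, and let d ∈ ℝ^w with ‖d‖₂ < σ. Define σ̂ = ‖σ·u + d‖₂ (so σ̂ ≥ σ − ‖d‖₂ > 0) and û = (σ·u + d)/σ̂. Then ‖u − û‖₂ ≤ 2‖d‖₂/(σ − ‖d‖₂). -/
/-- Euclidean norm of a vector in ℝ^n. -/
noncomputable def vnorm {n : ℕ} (v : Fin n → ℝ) : ℝ :=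
  Real.sqrt (∑ i, (v i) ^ 2)

lemma vnorm_eq {n : ℕ} (v : Fin n → ℝ) :
    vnorm v = ‖(WithLp.equiv 2 (Fin n → ℝ)).symm v‖ := by
  simp [vnorm, EuclideanSpace.norm_eq, Real.norm_eq_abs, sq_abs]

/-- Per-column singular-vector perturbation bound (eq:u_err) for SWICCA:
with `σ̂ = ‖σ·u + d‖₂` and `û = (σ·u + d)/σ̂`, we have
`‖u − û‖₂ ≤ 2‖d‖₂/(σ − ‖d‖₂)`. -/
theorem swicca_singular_vector_perturbation {w : ℕ} (hw : 1 ≤ w)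
    (u d : Fin w → ℝ) (hu : vnorm u = 1) (σ : ℝ) (hσ : 0 < σ)
    (hd : vnorm d < σ) :
    vnorm (u - (vnorm (σ • u + d))⁻¹ • (σ • u + d)) ≤
      2 * vnorm d / (σ - vnorm d) := by
  set E := EuclideanSpace ℝ (Fin w)
  set U : E := (WithLp.equiv 2 (Fin w → ℝ)).symm u with hU
  set D : E := (WithLp.equiv 2 (Fin w → ℝ)).symm d with hD
  have hnU : ‖U‖ = 1 := by rw [hU, ← vnorm_eq]; exact hu
  have hnD : ‖D‖ < σ := by rw [hD, ← vnorm_eq]; exact hd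
  have hvd : vnorm d = ‖D‖ := vnorm_eq d
  have hvsum : vnorm (σ • u + d) = ‖σ • U + D‖ := vnorm_eq _
  have hgoal : vnorm (u - (vnorm (σ • u + d))⁻¹ • (σ • u + d))
      = ‖U - ‖σ • U + D‖⁻¹ • (σ • U + D)‖ := by
    rw [hvsum]; exact vnorm_eq _
  rw [hgoal, hvd]
  set V : E := σ • U + D with hV
  set s : ℝ := ‖V‖ with hs
  have hσU : ‖σ • U‖ = σ := by
    rw [norm_smul, hnU, Real.norm_eq_abs, abs_of_pos hσ, mul_one]
  have hslb : σ - ‖D‖ ≤ s := by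
    have h2 : ‖V - D‖ ≤ s + ‖D‖ := norm_sub_le _ _
    have h3 : V - D = σ • U := by rw [hV]; abel
    rw [h3, hσU] at h2
    linarith
  have hspos : 0 < s := lt_of_lt_of_le (by linarith) hslb
  have hDlb : 0 < σ - ‖D‖ := by linarith
  have hrw : U - s⁻¹ • V = s⁻¹ • ((s - σ) • U - D) := by
    rw [hV]
    match_scalars <;> field_simp
  have habs : |s - σ| ≤ ‖D‖ := by
    have h := abs_norm_sub_norm_le V (σ • U)
    rw [hσU] at h
    have : V - σ • U = D := by rw [hV]; abel
    rwa [this] at h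
  have hnum : ‖(s - σ) • U - D‖ ≤ 2 * ‖D‖ := by
    calc ‖(s - σ) • U - D‖ ≤ ‖(s - σ) • U‖ + ‖D‖ := norm_sub_le _ _
      _ = |s - σ| + ‖D‖ := by rw [norm_smul, hnU, Real.norm_eq_abs, mul_one]
      _ ≤ 2 * ‖D‖ := by linarith
  calc ‖U - s⁻¹ • V‖ = s⁻¹ * ‖(s - σ) • U - D‖ := by
        rw [hrw, norm_smul, Real.norm_eq_abs, abs_of_pos (inv_pos.mpr hspos)]
    _ ≤ s⁻¹ * (2 * ‖D‖) := by
        exact mul_le_mul_of_nonneg_left hnum (le_of_lt (inv_pos.mpr hspos))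
    _ ≤ 2 * ‖D‖ / (σ - ‖D‖) := by
        rw [inv_mul_eq_div]
        gcongr
end

section
/- Let U ∈ ℝ^{w×r} have orthonormal columns u₁, …, u_r, let σ₁, …, σ_r > 0, and let E ∈ ℝ^{w×r} have columns e₁, …, e_r with ‖e_i‖₂ < σ_i for every i. Define σ̂_i = ‖σ_i·u_i + e_i‖₂ > 0 and let Û ∈ ℝ^{w×r} be the matrix whose i-th column is û_i = (σ_i·u_i + e_i)/σ̂_i. Then ‖Û − U‖_F ≤ 2‖E‖_F / min_{1≤i≤r} (σ_i − ‖e_i‖₂). -/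
open Matrix

/-- Frobenius norm of a real matrix. -/
noncomputable def frob {m n : ℕ} (M : Matrix (Fin m) (Fin n) ℝ) : ℝ :=
  Real.sqrt (∑ i, ∑ j, (M i j) ^ 2)

lemma vnorm_eq_s4 {n : ℕ} (v : EuclideanSpace ℝ (Fin n)) :
    vnorm (fun i => v i) = ‖v‖ := by
  rw [vnorm, EuclideanSpace.norm_eq]
  congr 1
  exact Finset.sum_congr rfl fun i _ => by rw [Real.norm_eq_abs, sq_abs]

lemma vnorm_sq {n : ℕ} (v : Fin n → ℝ) :
    vnorm v ^ 2 = ∑ i, (v i) ^ 2 := by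
  rw [vnorm, Real.sq_sqrt]
  positivity

lemma vnorm_nonneg {n : ℕ} (v : Fin n → ℝ) : 0 ≤ vnorm v :=
  Real.sqrt_nonneg _

lemma frob_eq_cols {m n : ℕ} (M : Matrix (Fin m) (Fin n) ℝ) :
    frob M = Real.sqrt (∑ j, vnorm (fun i => M i j) ^ 2) := by
  rw [frob, Finset.sum_comm]
  congr 1
  exact Finset.sum_congr rfl fun j _ => (vnorm_sq _).symm

lemma col_bound {n : ℕ} (u e : EuclideanSpace ℝ (Fin n)) (σ m : ℝ)
    (hu : ‖u‖ = 1) (hσ : 0 < σ) (hm : 0 < m)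
    (hmle : m ≤ σ - ‖e‖) :
    ‖(‖σ • u + e‖)⁻¹ • (σ • u + e) - u‖ ≤ 2 * ‖e‖ / m := by
  set v := σ • u + e with hv
  have hσu : ‖σ • u‖ = σ := by rw [norm_smul, hu]; simp [abs_of_pos hσ]
  have hsub : σ • u = v - e := by rw [hv]; abel
  have hσle : σ ≤ ‖v‖ + ‖e‖ := by
    calc σ = ‖σ • u‖ := hσu.symm
    _ = ‖v - e‖ := by rw [hsub]
    _ ≤ ‖v‖ + ‖e‖ := norm_sub_le _ _
  have hmv : m ≤ ‖v‖ := by linarith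
  have hvpos : 0 < ‖v‖ := lt_of_lt_of_le hm hmv
  have hvne : ‖v‖ ≠ 0 := ne_of_gt hvpos
  have habs : |σ - ‖v‖| ≤ ‖e‖ := by
    have h := abs_norm_sub_norm_le (σ • u) v
    have : σ • u - v = -e := by rw [hv]; abel
    rwa [this, norm_neg, hσu] at h
  have hdecomp : (‖v‖)⁻¹ • v - u = (‖v‖)⁻¹ • e + ((σ - ‖v‖) * (‖v‖)⁻¹) • u := by
    rw [hv]
    match_scalars <;> field_simp [show ‖σ • u + e‖ ≠ 0 from hvne]
  calc ‖(‖v‖)⁻¹ • v - u‖ ≤ ‖(‖v‖)⁻¹ • e‖ + ‖((σ - ‖v‖) * (‖v‖)⁻¹) • u‖ := by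
        rw [hdecomp]; exact norm_add_le _ _
    _ = ‖e‖ * (‖v‖)⁻¹ + |σ - ‖v‖| * (‖v‖)⁻¹ := by
        rw [norm_smul, norm_smul, hu, mul_one, Real.norm_eq_abs, Real.norm_eq_abs,
          abs_of_pos (inv_pos.mpr hvpos), abs_mul, abs_of_pos (inv_pos.mpr hvpos)]
        ring
    _ ≤ ‖e‖ * (‖v‖)⁻¹ + ‖e‖ * (‖v‖)⁻¹ := by
        gcongr
    _ = 2 * ‖e‖ / ‖v‖ := by ring
    _ ≤ 2 * ‖e‖ / m := by
        apply div_le_div_of_nonneg_left (by positivity) hm hmv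

/-- Aggregate left singular-vector perturbation bound from the error analysis of
the SWICCA algorithm (Theorem 2): with `σ̂_i = ‖σ_i·u_i + e_i‖₂` and
`û_i = (σ_i·u_i + e_i)/σ̂_i`,
`‖Û − U‖_F ≤ 2‖E‖_F / min_i (σ_i − ‖e_i‖₂)`. -/
theorem swicca_singular_vector_matrix_bound {w r : ℕ} (hr : 0 < r)
    (U E : Matrix (Fin w) (Fin r) ℝ) (hU : Uᵀ * U = 1)
    (σ : Fin r → ℝ) (hσ : ∀ i, 0 < σ i)
    (hE : ∀ i, vnorm (fun k => E k i) < σ i) :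
    frob ((Matrix.of fun k i =>
        (σ i * U k i + E k i) / vnorm (fun j => σ i * U j i + E j i)) - U) ≤
      2 * frob E / ⨅ i, (σ i - vnorm (fun k => E k i)) := by
  haveI : Nonempty (Fin r) := ⟨⟨0, hr⟩⟩
  set m := ⨅ i, (σ i - vnorm (fun k => E k i)) with hm_def
  have hbdd : BddBelow (Set.range fun i => σ i - vnorm (fun k => E k i)) :=
    Set.Finite.bddBelow (Set.finite_range _)
  have hm_le : ∀ i, m ≤ σ i - vnorm (fun k => E k i) := fun i => ciInf_le hbdd i
  have hm_pos : 0 < m := by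
    obtain ⟨i0, hi0⟩ := Finite.exists_min (fun i => σ i - vnorm (fun k => E k i))
    have h1 : σ i0 - vnorm (fun k => E k i0) ≤ m := le_ciInf hi0
    have h2 : 0 < σ i0 - vnorm (fun k => E k i0) := sub_pos.mpr (hE i0)
    linarith
  -- columns as Euclidean vectors
  set u : Fin r → EuclideanSpace ℝ (Fin w) := fun i => WithLp.toLp 2 (fun k => U k i) with hu_def
  set e : Fin r → EuclideanSpace ℝ (Fin w) := fun i => WithLp.toLp 2 (fun k => E k i) with he_def
  have hu_norm : ∀ i, ‖u i‖ = 1 := by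
    intro i
    have h1 : ∑ k, (U k i) ^ 2 = 1 := by
      have := congrFun (congrFun hU i) i
      simpa [Matrix.mul_apply, Matrix.transpose_apply, Matrix.one_apply, sq] using this
    rw [← vnorm_eq_s4 (u i)]
    simp only [hu_def, WithLp.ofLp_toLp]
    rw [vnorm, h1, Real.sqrt_one]
  have he_norm : ∀ i, ‖e i‖ = vnorm (fun k => E k i) := fun i => (vnorm_eq_s4 (e i)).symm
  have key : ∀ i, vnorm (fun k =>
      ((Matrix.of fun k i => (σ i * U k i + E k i) / vnorm (fun j => σ i * U j i + E j i)) - U) k i)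
      ≤ 2 * vnorm (fun k => E k i) / m := by
    intro i
    have hcol : (fun k =>
        ((Matrix.of fun k i => (σ i * U k i + E k i) / vnorm (fun j => σ i * U j i + E j i)) - U) k i)
        = fun k => ((‖σ i • u i + e i‖)⁻¹ • (σ i • u i + e i) - u i) k := by
      funext k
      have hv : vnorm (fun j => σ i * U j i + E j i) = ‖σ i • u i + e i‖ := by
        rw [← vnorm_eq_s4 (σ i • u i + e i)]
        congr 1
      simp only [Matrix.sub_apply, Matrix.of_apply, hv, PiLp.sub_apply, PiLp.smul_apply,
        PiLp.add_apply, smul_eq_mul]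
      simp only [hu_def, he_def, WithLp.ofLp_toLp]
      ring
    rw [hcol, vnorm_eq_s4]
    rw [← he_norm i]
    exact col_bound (u i) (e i) (σ i) m (hu_norm i) (hσ i) hm_pos
      (by rw [he_norm i]; exact hm_le i)
  rw [frob_eq_cols, frob_eq_cols E]
  calc Real.sqrt (∑ j, vnorm (fun k =>
        ((Matrix.of fun k i => (σ i * U k i + E k i) / vnorm (fun j => σ i * U j i + E j i)) - U) k j) ^ 2)
      ≤ Real.sqrt (∑ j, (2 * vnorm (fun k => E k j) / m) ^ 2) := by
        apply Real.sqrt_le_sqrt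
        apply Finset.sum_le_sum
        intro j _
        exact pow_le_pow_left₀ (vnorm_nonneg _) (key j) 2
    _ = 2 * Real.sqrt (∑ j, vnorm (fun k => E k j) ^ 2) / m := by
        have h : ∑ j, (2 * vnorm (fun k => E k j) / m) ^ 2
            = (2 / m) ^ 2 * ∑ j, vnorm (fun k => E k j) ^ 2 := by
          rw [Finset.mul_sum]
          exact Finset.sum_congr rfl fun j _ => by ring
        rw [h, Real.sqrt_mul (by positivity), Real.sqrt_sq (by positivity)]
        ring
end
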